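/- Let Λ and Γ be g-fusion Bessel sequences in H and K with synthesis operators T_Λ and T_Γ. Then the synthesis operator of the tensor product family satisfies T_{Λ⊗Γ} = T_Λ ⊗ T_Γ as operators from ℓ²({H_i ⊗ K_j}) ≅ ℓ²({H_i}) ⊗ ℓ²({K_j}) to H ⊗ K, and consequently the analysis operator satisfies T*_{Λ⊗Γ} = T*_Λ ⊗ T*_Γ. -/

import Mathlib

noncomputable section

open Submodule ContinuousLinearMap

local notation "⟪" x ", " y "⟫" => @inner ℂ _ _ x y

/-- An abstract realization of the Hilbert-space tensor product of `H` and `K`: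
a map `tmul : H → K → E` whose inner products multiply and whose elementary
tensors have dense span. -/
structure HilbertTensor (H K E : Type*) [NormedAddCommGroup H] [InnerProductSpace ℂ H]
    [NormedAddCommGroup K] [InnerProductSpace ℂ K]
    [NormedAddCommGroup E] [InnerProductSpace ℂ E] where
  tmul : H → K → E
  inner_tmul : ∀ (f f' : H) (g g' : K),
    ⟪tmul f g, tmul f' g'⟫ = ⟪f, f'⟫ * ⟪g, g'⟫
  dense_span : Dense (Submodule.span ℂ (Set.range fun p : H × K => tmul p.1 p.2) : Set E)

variable {H K E H' K' E' : Type*}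
variable [NormedAddCommGroup H] [InnerProductSpace ℂ H]
variable [NormedAddCommGroup K] [InnerProductSpace ℂ K]
variable [NormedAddCommGroup E] [InnerProductSpace ℂ E]
variable [NormedAddCommGroup H'] [InnerProductSpace ℂ H']
variable [NormedAddCommGroup K'] [InnerProductSpace ℂ K']
variable [NormedAddCommGroup E'] [InnerProductSpace ℂ E']

/-- The orthogonal projection onto a (closed) subspace, as an operator `H →L[ℂ] H`. -/
def projL (V : Submodule ℂ H) [HasOrthogonalProjection V] : H →L[ℂ] H :=
  V.subtypeL.comp (orthogonalProjection V)

/-- `R` is the tensor product operator `Q ⊗ T`, i.e. it is determined on elementary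
tensors by `(Q ⊗ T)(f ⊗ g) = Qf ⊗ Tg`. -/
def IsTensorOp (tp : HilbertTensor H K E) (tp' : HilbertTensor H' K' E')
    (Q : H →L[ℂ] H') (T : K →L[ℂ] K') (R : E →L[ℂ] E') : Prop :=
  ∀ (f : H) (g : K), R (tp.tmul f g) = tp'.tmul (Q f) (T g)

/-- The tensor product `V ⊗ W` of subspaces: the closure of the span of elementary
tensors of elements of `V` and `W`. -/
def tsub (tp : HilbertTensor H K E) (V : Submodule ℂ H) (W : Submodule ℂ K) : Submodule ℂ E :=
  (Submodule.span ℂ {x : E | ∃ f ∈ V, ∃ g ∈ W, x = tp.tmul f g}).topologicalClosure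

/-- `{(V i, Λ i, v i)}` is a g-fusion Bessel sequence in `H` with bound `B`. -/
def IsGFusionBessel {ι : Type*} {Hi : ι → Type*}
    [∀ i, NormedAddCommGroup (Hi i)] [∀ i, InnerProductSpace ℂ (Hi i)]
    (V : ι → Submodule ℂ H) [∀ i, HasOrthogonalProjection (V i)]
    (Λ : ∀ i, H →L[ℂ] Hi i) (v : ι → ℝ) (B : ℝ) : Prop :=
  (∀ i, 0 < v i) ∧ 0 < B ∧
    ∀ f : H, ∑' i, (v i) ^ 2 * ‖Λ i (projL (V i) f)‖ ^ 2 ≤ B * ‖f‖ ^ 2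

/-- `{(V i, Λ i, v i)}` is a g-fusion frame for `H` with bounds `A ≤ B`. -/
def IsGFusionFrame {ι : Type*} {Hi : ι → Type*}
    [∀ i, NormedAddCommGroup (Hi i)] [∀ i, InnerProductSpace ℂ (Hi i)]
    (V : ι → Submodule ℂ H) [∀ i, HasOrthogonalProjection (V i)]
    (Λ : ∀ i, H →L[ℂ] Hi i) (v : ι → ℝ) (A B : ℝ) : Prop :=
  (∀ i, 0 < v i) ∧ 0 < A ∧ A ≤ B ∧
    ∀ f : H, A * ‖f‖ ^ 2 ≤ ∑' i, (v i) ^ 2 * ‖Λ i (projL (V i) f)‖ ^ 2 ∧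
      ∑' i, (v i) ^ 2 * ‖Λ i (projL (V i) f)‖ ^ 2 ≤ B * ‖f‖ ^ 2


section AuxLemmas

/-- `projL` is just the coercion of the orthogonal projection. -/
lemma projL_apply (V : Submodule ℂ H) [HasOrthogonalProjection V] (x : H) :
    projL V x = (orthogonalProjection V x : H) := rfl

/-- Two vectors agreeing against all elementary tensors are equal. -/
lemma HilbertTensor.ext_of_inner_tmul (tp : HilbertTensor H K E) {a b : E}
    (h : ∀ (f : H) (g : K), ⟪a, tp.tmul f g⟫ = ⟪b, tp.tmul f g⟫) : a = b := by
  have key : ∀ u : E, ⟪a - b, u⟫ = 0 := by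
    have hker : (Submodule.span ℂ (Set.range fun p : H × K => tp.tmul p.1 p.2)) ≤
        LinearMap.ker (innerSL ℂ (a - b) : E →ₗ[ℂ] ℂ) := by
      rw [Submodule.span_le]
      rintro u ⟨⟨f, g⟩, rfl⟩
      simp only [SetLike.mem_coe, LinearMap.mem_ker, ContinuousLinearMap.coe_coe, innerSL_apply_apply]
      rw [inner_sub_left, h f g, sub_self]
    have hle : (Submodule.span ℂ
        (Set.range fun p : H × K => tp.tmul p.1 p.2)).topologicalClosure ≤
        LinearMap.ker (innerSL ℂ (a - b) : E →ₗ[ℂ] ℂ) :=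
      Submodule.topologicalClosure_minimal _ hker (isClosed_ker _)
    have htop : (Submodule.span ℂ
        (Set.range fun p : H × K => tp.tmul p.1 p.2)).topologicalClosure = ⊤ :=
      Submodule.dense_iff_topologicalClosure_eq_top.1 tp.dense_span
    intro u
    have hu : u ∈ LinearMap.ker (innerSL ℂ (a - b) : E →ₗ[ℂ] ℂ) := hle (htop ▸ Submodule.mem_top)
    simpa only [LinearMap.mem_ker, ContinuousLinearMap.coe_coe, innerSL_apply_apply] using hu
  rw [← sub_eq_zero, ← @inner_self_eq_zero ℂ]
  exact key _

/-- Real scalars pull out of both slots of `tmul`. -/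
lemma HilbertTensor.tmul_smul_smul [CompleteSpace E] (tp : HilbertTensor H K E)
    (r s : ℝ) (a : H) (b : K) :
    tp.tmul (r • a) (s • b) = (r * s) • tp.tmul a b := by
  apply tp.ext_of_inner_tmul
  intro f g
  rw [tp.inner_tmul, ← Complex.coe_smul (r * s), ← Complex.coe_smul r, ← Complex.coe_smul s,
    inner_smul_left, inner_smul_left, inner_smul_left, tp.inner_tmul]
  simp only [Complex.ofReal_mul, map_mul, Complex.conj_ofReal]
  ring

/-- The orthogonal projection onto `V ⊗ W` sends `f ⊗ g` to `P_V f ⊗ P_W g`. -/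
lemma projL_tsub_tmul (tp : HilbertTensor H K E) (V : Submodule ℂ H) (W : Submodule ℂ K)
    [HasOrthogonalProjection V] [HasOrthogonalProjection W]
    [HasOrthogonalProjection (tsub tp V W)] (f : H) (g : K) :
    projL (tsub tp V W) (tp.tmul f g) = tp.tmul (projL V f) (projL W g) := by
  have hmem : tp.tmul (projL V f) (projL W g) ∈ tsub tp V W := by
    refine Submodule.le_topologicalClosure _ (Submodule.subset_span ?_)
    exact ⟨projL V f, Submodule.coe_mem _, projL W g, Submodule.coe_mem _, rfl⟩
  have horth : ∀ u ∈ tsub tp V W,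
      ⟪tp.tmul f g - tp.tmul (projL V f) (projL W g), u⟫ = 0 := by
    intro u hu
    have hker : Submodule.span ℂ {x : E | ∃ f' ∈ V, ∃ g' ∈ W, x = tp.tmul f' g'} ≤
        LinearMap.ker (innerSL ℂ (tp.tmul f g - tp.tmul (projL V f) (projL W g)) : E →ₗ[ℂ] ℂ) := by
      rw [Submodule.span_le]
      rintro x ⟨a', ha, b', hb, rfl⟩
      simp only [SetLike.mem_coe, LinearMap.mem_ker, ContinuousLinearMap.coe_coe, innerSL_apply_apply]
      rw [inner_sub_left, tp.inner_tmul, tp.inner_tmul]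
      have h1 : ⟪projL V f, a'⟫ = ⟪f, a'⟫ := by
        have h := starProjection_inner_eq_zero f a' ha
        rw [inner_sub_left, sub_eq_zero] at h
        exact h.symm
      have h2 : ⟪projL W g, b'⟫ = ⟪g, b'⟫ := by
        have h := starProjection_inner_eq_zero g b' hb
        rw [inner_sub_left, sub_eq_zero] at h
        exact h.symm
      rw [h1, h2, sub_self]
    have hle := Submodule.topologicalClosure_minimal _ hker (isClosed_ker _)
    have hu' : u ∈ LinearMap.ker
        (innerSL ℂ (tp.tmul f g - tp.tmul (projL V f) (projL W g)) : E →ₗ[ℂ] ℂ) := hle hu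
    simpa only [LinearMap.mem_ker, ContinuousLinearMap.coe_coe, innerSL_apply_apply] using hu'
  rw [projL_apply]
  exact eq_starProjection_of_mem_of_inner_eq_zero hmem horth

/-- Coordinate formula for the adjoint of a synthesis-type operator. -/
lemma adjoint_apply_coord [CompleteSpace H] {ι : Type*} {Hi : ι → Type*}
    [∀ i, NormedAddCommGroup (Hi i)] [∀ i, InnerProductSpace ℂ (Hi i)]
    [∀ i, CompleteSpace (Hi i)]
    (T : lp (fun i => Hi i) 2 →L[ℂ] H)
    (V : ι → Submodule ℂ H) [∀ i, HasOrthogonalProjection (V i)]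
    (Λ : ∀ i, H →L[ℂ] Hi i) (v : ι → ℝ)
    (hT : ∀ x : lp (fun i => Hi i) 2,
      T x = ∑' i, v i • projL (V i) (ContinuousLinearMap.adjoint (Λ i) (x i)))
    (f : H) (i : ι) :
    (ContinuousLinearMap.adjoint T f) i = v i • Λ i (projL (V i) f) := by
  classical
  apply ext_inner_right ℂ
  intro c
  have h0 : ⟪(ContinuousLinearMap.adjoint T f) i, c⟫
      = ⟪ContinuousLinearMap.adjoint T f, lp.single 2 i c⟫ :=
    (lp.inner_single_right i c _).symm
  rw [h0, ContinuousLinearMap.adjoint_inner_left, hT]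
  have hsingle : ∀ i', i' ≠ i →
      v i' • projL (V i') (ContinuousLinearMap.adjoint (Λ i')
        ((lp.single 2 i c : lp (fun i => Hi i) 2) i')) = 0 := by
    intro i' hi'
    rw [lp.single_apply_ne 2 i c hi']
    simp
  rw [tsum_eq_single i hsingle, lp.single_apply_self]
  rw [← Complex.coe_smul, ← Complex.coe_smul, inner_smul_right, inner_smul_left,
    Complex.conj_ofReal]
  congr 1
  rw [projL_apply, projL_apply, ← starProjection_apply, ← starProjection_apply,
    ← inner_starProjection_left_eq_right,
    ContinuousLinearMap.adjoint_inner_right]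

end AuxLemmas

set_option maxHeartbeats 1600000 in
/-- `T_{Λ⊗Γ} = T_Λ ⊗ T_Γ` and consequently `T*_{Λ⊗Γ} = T*_Λ ⊗ T*_Γ`,
under the identification `ℓ²({H_i ⊗ K_j}) ≅ ℓ²({H_i}) ⊗ ℓ²({K_j})` sending the
elementary tensor `x ⊗ y` to the family `(x_i ⊗ y_j)_{ij}`. -/
theorem stmt_11 {ι κ : Type*} [CompleteSpace H] [CompleteSpace K] [CompleteSpace E]
    {Hi : ι → Type*} [∀ i, NormedAddCommGroup (Hi i)] [∀ i, InnerProductSpace ℂ (Hi i)]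
    [∀ i, CompleteSpace (Hi i)]
    {Kj : κ → Type*} [∀ j, NormedAddCommGroup (Kj j)] [∀ j, InnerProductSpace ℂ (Kj j)]
    [∀ j, CompleteSpace (Kj j)]
    {Eij : ι → κ → Type*} [∀ i j, NormedAddCommGroup (Eij i j)]
    [∀ i j, InnerProductSpace ℂ (Eij i j)] [∀ i j, CompleteSpace (Eij i j)]
    (tp : HilbertTensor H K E) (tpij : ∀ i j, HilbertTensor (Hi i) (Kj j) (Eij i j))
    (V : ι → Submodule ℂ H) [∀ i, HasOrthogonalProjection (V i)]
    (W : κ → Submodule ℂ K) [∀ j, HasOrthogonalProjection (W j)]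
    [∀ i j, HasOrthogonalProjection (tsub tp (V i) (W j))]
    (Λ : ∀ i, H →L[ℂ] Hi i) (Γ : ∀ j, K →L[ℂ] Kj j)
    (v : ι → ℝ) (w : κ → ℝ) (B D : ℝ)
    (hΛ : IsGFusionBessel V Λ v B) (hΓ : IsGFusionBessel W Γ w D)
    (Rij : ∀ i j, E →L[ℂ] Eij i j)
    (hRij : ∀ i j, IsTensorOp tp (tpij i j) (Λ i) (Γ j) (Rij i j))
    (TΛ : lp (fun i => Hi i) 2 →L[ℂ] H) (TΓ : lp (fun j => Kj j) 2 →L[ℂ] K)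
    (TΛΓ : lp (fun p : ι × κ => Eij p.1 p.2) 2 →L[ℂ] E)
    (hTΛ : ∀ x : lp (fun i => Hi i) 2,
      TΛ x = ∑' i, v i • projL (V i) (ContinuousLinearMap.adjoint (Λ i) (x i)))
    (hTΓ : ∀ y : lp (fun j => Kj j) 2,
      TΓ y = ∑' j, w j • projL (W j) (ContinuousLinearMap.adjoint (Γ j) (y j)))
    (hTΛΓ : ∀ z : lp (fun p : ι × κ => Eij p.1 p.2) 2,
      TΛΓ z = ∑' p : ι × κ, (v p.1 * w p.2) •
        projL (tsub tp (V p.1) (W p.2)) (ContinuousLinearMap.adjoint (Rij p.1 p.2) (z p))) :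
    (∀ (x : lp (fun i => Hi i) 2) (y : lp (fun j => Kj j) 2)
        (z : lp (fun p : ι × κ => Eij p.1 p.2) 2),
      (∀ p : ι × κ, z p = (tpij p.1 p.2).tmul (x p.1) (y p.2)) →
        TΛΓ z = tp.tmul (TΛ x) (TΓ y)) ∧
    (∀ (f : H) (g : K) (p : ι × κ),
      (ContinuousLinearMap.adjoint TΛΓ) (tp.tmul f g) p =
        (tpij p.1 p.2).tmul ((ContinuousLinearMap.adjoint TΛ) f p.1)
          ((ContinuousLinearMap.adjoint TΓ) g p.2)) := by
    classical
  have hAΛ : ∀ (f : H) (i : ι),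
      (ContinuousLinearMap.adjoint TΛ f) i = v i • Λ i (projL (V i) f) :=
    fun f i => adjoint_apply_coord TΛ V Λ v hTΛ f i
  have hAΓ : ∀ (g : K) (j : κ),
      (ContinuousLinearMap.adjoint TΓ g) j = w j • Γ j (projL (W j) g) :=
    fun g j => adjoint_apply_coord TΓ W Γ w hTΓ g j
  have hAΛΓ : ∀ (u : E) (p : ι × κ),
      (ContinuousLinearMap.adjoint TΛΓ u) p
        = (v p.1 * w p.2) • Rij p.1 p.2 (projL (tsub tp (V p.1) (W p.2)) u) :=
    fun u p => adjoint_apply_coord TΛΓ (fun p : ι × κ => tsub tp (V p.1) (W p.2))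
      (fun p : ι × κ => Rij p.1 p.2) (fun p : ι × κ => v p.1 * w p.2) hTΛΓ u p
  have hAdjTmul : ∀ (f : H) (g : K) (p : ι × κ),
      (ContinuousLinearMap.adjoint TΛΓ (tp.tmul f g)) p
        = (v p.1 * w p.2) • (tpij p.1 p.2).tmul (Λ p.1 (projL (V p.1) f))
            (Γ p.2 (projL (W p.2) g)) := by
    intro f g p
    rw [hAΛΓ, projL_tsub_tmul tp (V p.1) (W p.2) f g, hRij]
  constructor
  · intro x y z hz
    apply tp.ext_of_inner_tmul
    intro f g
    set c : ι → ℂ := fun i => ((v i : ℂ)) * ⟪x i, Λ i (projL (V i) f)⟫ with hc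
    set d : κ → ℂ := fun j => ((w j : ℂ)) * ⟪y j, Γ j (projL (W j) g)⟫ with hd
    have h2x : ∀ i, ⟪x i, (ContinuousLinearMap.adjoint TΛ f) i⟫ = c i := by
      intro i
      rw [hAΛ, ← Complex.coe_smul, inner_smul_right]
    have h2y : ∀ j, ⟪y j, (ContinuousLinearMap.adjoint TΓ g) j⟫ = d j := by
      intro j
      rw [hAΓ, ← Complex.coe_smul, inner_smul_right]
    have hcx : Summable c := (lp.summable_inner x (ContinuousLinearMap.adjoint TΛ f)).congr h2x
    have hdy : Summable d := (lp.summable_inner y (ContinuousLinearMap.adjoint TΓ g)).congr h2y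
    have hterm : ∀ p : ι × κ,
        ⟪z p, (ContinuousLinearMap.adjoint TΛΓ (tp.tmul f g)) p⟫ = c p.1 * d p.2 := by
      intro p
      rw [hAdjTmul, hz p, ← Complex.coe_smul, inner_smul_right, (tpij p.1 p.2).inner_tmul]
      simp only [hc, hd, Complex.ofReal_mul]
      ring
    calc ⟪TΛΓ z, tp.tmul f g⟫
        = ⟪z, ContinuousLinearMap.adjoint TΛΓ (tp.tmul f g)⟫ :=
          (ContinuousLinearMap.adjoint_inner_right _ _ _).symm
      _ = ∑' p : ι × κ, ⟪z p, (ContinuousLinearMap.adjoint TΛΓ (tp.tmul f g)) p⟫ :=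
          lp.inner_eq_tsum _ _
      _ = ∑' p : ι × κ, c p.1 * d p.2 := tsum_congr hterm
      _ = (∑' i, c i) * ∑' j, d j :=
          (tsum_mul_tsum_of_summable_norm (summable_norm_iff.2 hcx)
            (summable_norm_iff.2 hdy)).symm
      _ = ⟪TΛ x, f⟫ * ⟪TΓ y, g⟫ := by
          congr 1
          · exact (calc ⟪TΛ x, f⟫ = ⟪x, ContinuousLinearMap.adjoint TΛ f⟫ :=
                  (ContinuousLinearMap.adjoint_inner_right _ _ _).symm
              _ = ∑' i, ⟪x i, (ContinuousLinearMap.adjoint TΛ f) i⟫ := lp.inner_eq_tsum _ _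
              _ = ∑' i, c i := tsum_congr h2x).symm
          · exact (calc ⟪TΓ y, g⟫ = ⟪y, ContinuousLinearMap.adjoint TΓ g⟫ :=
                  (ContinuousLinearMap.adjoint_inner_right _ _ _).symm
              _ = ∑' j, ⟪y j, (ContinuousLinearMap.adjoint TΓ g) j⟫ := lp.inner_eq_tsum _ _
              _ = ∑' j, d j := tsum_congr h2y).symm
      _ = ⟪tp.tmul (TΛ x) (TΓ y), tp.tmul f g⟫ := (tp.inner_tmul _ _ _ _).symm
  · intro f g p
    rw [hAdjTmul, hAΛ, hAΓ, (tpij p.1 p.2).tmul_smul_smul]
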